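/- Feasibility characterization of the simplified MUST-M problem in case A: assume 0 < γ ≤ 1/β, β > 0, Y ≥ 0, and Z ≥ 0. Then there exists a feasible pair (x, y) for the simplified MUST-M problem if and only if X̃' ≥ X̃ − (1/β − γ)·min(Y, Z/γ, β·X̃). -/

import Mathlib

open Finset

/-- Feasibility for the simplified MUST-M problem. -/
def Feasible {V : Type*} [Fintype V] (xt : V → ℝ) (β γ X' Y Z : ℝ)
    (x y : V → ℝ) : Prop :=
  (∀ v, 0 ≤ x v) ∧ (∀ v, 0 ≤ y v) ∧ (∀ v, xt v ≤ x v + (1 / β) * y v) ∧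
  (∑ v, (x v + γ * y v)) ≤ X' ∧ (∑ v, y v) ≤ Y ∧ (∑ v, γ * y v) ≤ Z

/-- Feasibility characterization of the simplified MUST-M problem in
case A. -/
theorem mustm_caseA_feasibility {V : Type*} [Fintype V]
    (xt : V → ℝ) (β γ X' Y Z : ℝ)
    (hxt : ∀ v, 0 ≤ xt v) (hβ : 0 < β) (hγ : 0 < γ) (hγβ : γ ≤ 1 / β)
    (hY : 0 ≤ Y) (hZ : 0 ≤ Z) :
    (∃ x y : V → ℝ, Feasible xt β γ X' Y Z x y) ↔
      (∑ v, xt v) - (1 / β - γ) * min Y (min (Z / γ) (β * ∑ v, xt v)) ≤ X' := by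
  set X := ∑ v, xt v with hXdef
  set M := min Y (min (Z / γ) (β * X)) with hMdef
  have hXnn : 0 ≤ X := Finset.sum_nonneg fun v _ => hxt v
  have hM0 : 0 ≤ M := le_min hY (le_min (div_nonneg hZ hγ.le) (by positivity))
  have hMβX : M ≤ β * X := (min_le_right _ _).trans (min_le_right _ _)
  have hMZ : M ≤ Z / γ := (min_le_right _ _).trans (min_le_left _ _)
  have hMY : M ≤ Y := min_le_left _ _
  constructor
  · rintro ⟨x, y, hx, hy, hcov, hobj, hYc, hZc⟩
    set S := ∑ v, y v with hSdef
    have hS0 : 0 ≤ S := Finset.sum_nonneg fun v _ => hy v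
    have hx0 : 0 ≤ ∑ v, x v := Finset.sum_nonneg fun v _ => hx v
    have hsplit : ∑ v, (x v + γ * y v) = (∑ v, x v) + γ * S := by
      rw [Finset.sum_add_distrib, Finset.mul_sum]
    have hcovsum : X ≤ (∑ v, x v) + (1 / β) * S := by
      calc X ≤ ∑ v, (x v + (1 / β) * y v) := Finset.sum_le_sum fun v _ => hcov v
        _ = (∑ v, x v) + (1 / β) * S := by
            rw [Finset.sum_add_distrib, Finset.mul_sum]
    have hγS : γ * S ≤ Z := by
      rw [hSdef, Finset.mul_sum]; exact hZc
    have hobj' : (∑ v, x v) + γ * S ≤ X' := hsplit ▸ hobj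
    set S' := min S (β * X) with hS'def
    have hS'M : S' ≤ M := by
      refine le_min ((min_le_left _ _).trans hYc) (le_min ?_ (min_le_right _ _))
      exact (min_le_left _ _).trans ((le_div_iff₀ hγ).mpr (by linarith))
    have hkey : X - (1 / β - γ) * S' ≤ X' := by
      rcases le_total S (β * X) with h | h
      · rw [hS'def, min_eq_left h]
        linarith
      · rw [hS'def, min_eq_right h]
        have hexp : (1 / β - γ) * (β * X) = X - γ * (β * X) := by
          field_simp
        have hγβX : γ * (β * X) ≤ γ * S := mul_le_mul_of_nonneg_left h hγ.le
        linarith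
    have hmm : (1 / β - γ) * S' ≤ (1 / β - γ) * M :=
      mul_le_mul_of_nonneg_left hS'M (by linarith)
    linarith
  · intro hX'
    rcases eq_or_lt_of_le hXnn with hX0 | hXpos
    · have hM : M = 0 := le_antisymm (by rw [← hX0, mul_zero] at hMβX; exact hMβX) hM0
      have hxt0 : ∀ v, xt v = 0 := fun v =>
        (Finset.sum_eq_zero_iff_of_nonneg (fun v _ => hxt v)).mp hX0.symm v (Finset.mem_univ v)
      refine ⟨0, 0, fun v => le_refl 0, fun v => le_refl 0, ?_, ?_, ?_, ?_⟩
      · intro v; simp [hxt0 v]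
      · rw [hM, mul_zero, sub_zero, ← hX0] at hX'
        simpa using hX'
      · simpa using hY
      · simpa using hZ
    · set c := M / X with hcdef
      have hc0 : 0 ≤ c := div_nonneg hM0 hXnn
      have hcβ : c ≤ β := (div_le_iff₀ hXpos).mpr (by linarith)
      have hcX : c * X = M := div_mul_cancel₀ M hXpos.ne'
      have hcβ1 : c / β ≤ 1 := (div_le_one hβ).mpr hcβ
      refine ⟨fun v => (1 - c / β) * xt v, fun v => c * xt v, ?_, ?_, ?_, ?_, ?_, ?_⟩
      · intro v; exact mul_nonneg (by linarith) (hxt v)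
      · intro v; exact mul_nonneg hc0 (hxt v)
      · intro v
        have h : (1 - c / β) * xt v + (1 / β) * (c * xt v) = xt v := by
          field_simp; ring
        rw [h]
      · have hsum : ∑ v, ((1 - c / β) * xt v + γ * (c * xt v))
            = (1 - c / β + γ * c) * X := by
          rw [hXdef, Finset.mul_sum]
          exact Finset.sum_congr rfl fun v _ => by ring
        rw [hsum]
        have hval : (1 - c / β + γ * c) * X = X - (1 / β - γ) * M := by
          rw [← hcX]; field_simp; ring
        linarith
      · have hsum : ∑ v, c * xt v = M := by
          rw [← Finset.mul_sum, ← hXdef, hcX]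
        rw [hsum]; exact hMY
      · have hsum : ∑ v, γ * (c * xt v) = γ * M := by
          have h1 : ∑ v, γ * (c * xt v) = γ * c * ∑ v, xt v := by
            rw [Finset.mul_sum]
            exact Finset.sum_congr rfl fun v _ => by ring
          rw [h1, ← hXdef, mul_assoc, hcX]
        rw [hsum]
        have := (le_div_iff₀ hγ).mp hMZ
        linarith
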